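/- (First half of the incomparability of the noisy model of Lv et al. with the label-aligned condition.) Let Y = {1,2,3}, let Q ∈ Δ(Y) be the point mass at label 1, and let M(1) ∈ Δ(S) assign M(1)({1}) = 1/10, M(1)({3}) = 4/10, M(1)({1,2}) = 5/10, and 0 to all other bags (M(2) and M(3) arbitrary probability vectors on S, irrelevant since Q(2) = Q(3) = 0). Then: (a) the bag frequencies are F(1) = 6/10, F(2) = 5/10, F(3) = 4/10, so argmax F = {1} = argmax Q (the scenario is label-aligned at this instance); yet (b) Σ_{s ∈ S, 1 ∈ s} M(1)(s)/|s| = 7/20 < 8/20 = Σ_{s ∈ S, 3 ∈ s} M(1)(s)/|s|, so the averaged-frequency condition Σ_{s ∋ i} M(i)(s)/|s| > Σ_{s ∋ j} M(i)(s)/|s| for all j ≠ i of the noisy model of Lv et al. fails for i = 1, j = 3. -/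
import Mathlib


/-- A probability vector on a finite type `T`. -/
def IsProbVec {T : Type*} [Fintype T] (Q : T → ℝ) : Prop :=
  (∀ t, 0 ≤ Q t) ∧ ∑ t, Q t = 1

/-- The argmax set of a real-valued function on labels. -/
def argmaxSet {Y : Type*} (Q : Y → ℝ) : Set Y := {y | ∀ y', Q y' ≤ Q y}

/-- The bag frequency of label `y` under kernel `M` and label distribution `Q`. -/
def bagFreq {Y : Type*} [Fintype Y] [DecidableEq Y]
    (M : Y → Finset Y → ℝ) (Q : Y → ℝ) (y : Y) : ℝ :=
  ∑ s ∈ Finset.univ.filter (fun s : Finset Y => y ∈ s), ∑ y', Q y' * M y' s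

/- Labels `1, 2, 3` of the paper are encoded as `0, 1, 2 : Fin 3`. -/

/-- First half of the incomparability of the noisy model of Lv et al. with the
label-aligned condition: with `Q` the point mass at label `1` and
`M(1)({1}) = 1/10, M(1)({3}) = 4/10, M(1)({1,2}) = 5/10` (other bags `0`), the
bag frequencies are `F(1) = 6/10 > F(2) = 5/10 > F(3) = 4/10`, so
`argmax F = {1} = argmax Q` (label-aligned at this instance); yet
`Σ_{s ∋ 1} M(1)(s)/|s| = 7/20 < 8/20 = Σ_{s ∋ 3} M(1)(s)/|s|`, so the
averaged-frequency condition of the noisy model of Lv et al. fails. -/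
theorem lv_noisy_incomparability_first_half
    (M : Fin 3 → Finset (Fin 3) → ℝ) (hM : ∀ y, IsProbVec (M y))
    (hM0 : M 0 = fun s : Finset (Fin 3) =>
      if s = {0} then 1/10 else if s = {2} then 4/10
      else if s = ({0, 1} : Finset (Fin 3)) then 5/10 else 0) :
    bagFreq M (fun y => if y = 0 then 1 else 0) 0 = 6/10 ∧
    bagFreq M (fun y => if y = 0 then 1 else 0) 1 = 5/10 ∧
    bagFreq M (fun y => if y = 0 then 1 else 0) 2 = 4/10 ∧
    argmaxSet (bagFreq M (fun y => if y = 0 then 1 else 0)) = {0} ∧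
    argmaxSet (fun y : Fin 3 => if y = 0 then (1 : ℝ) else 0) = {0} ∧
    (∑ s ∈ Finset.univ.filter (fun s : Finset (Fin 3) => 0 ∈ s),
        M 0 s / (s.card : ℝ)) = 7/20 ∧
    (∑ s ∈ Finset.univ.filter (fun s : Finset (Fin 3) => 2 ∈ s),
        M 0 s / (s.card : ℝ)) = 8/20 ∧
    ¬ (∀ j : Fin 3, j ≠ 0 →
        (∑ s ∈ Finset.univ.filter (fun s : Finset (Fin 3) => j ∈ s),
          M 0 s / (s.card : ℝ)) <
        (∑ s ∈ Finset.univ.filter (fun s : Finset (Fin 3) => 0 ∈ s),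
          M 0 s / (s.card : ℝ))) := by
  -- values of M 0 on bags
  have v1 : M 0 {0} = 1/10 := by rw [hM0]; simp
  have v2 : M 0 {2} = 4/10 := by
    rw [hM0]; simp
  have v3 : M 0 ({0,1} : Finset (Fin 3)) = 5/10 := by
    rw [hM0]; simp; rw [if_neg (by decide), if_neg (by decide)]
  have v4 : M 0 ({1} : Finset (Fin 3)) = 0 := by
    simp only [hM0]; rw [if_neg (by decide), if_neg (by decide), if_neg (by decide)]
  have v5 : M 0 ({0,2} : Finset (Fin 3)) = 0 := by
    simp only [hM0]; rw [if_neg (by decide), if_neg (by decide), if_neg (by decide)]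
  have v6 : M 0 ({1,2} : Finset (Fin 3)) = 0 := by
    simp only [hM0]; rw [if_neg (by decide), if_neg (by decide), if_neg (by decide)]
  have v7 : M 0 ({0,1,2} : Finset (Fin 3)) = 0 := by
    simp only [hM0]; rw [if_neg (by decide), if_neg (by decide), if_neg (by decide)]
  have key : ∀ y : Fin 3, bagFreq M (fun y => if y = 0 then (1:ℝ) else 0) y
      = ∑ s ∈ Finset.univ.filter (fun s : Finset (Fin 3) => y ∈ s), M 0 s := by
    intro y
    unfold bagFreq
    refine Finset.sum_congr rfl fun s _ => ?_
    simp [Fin.sum_univ_three]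
  have e0 : Finset.univ.filter (fun s : Finset (Fin 3) => (0:Fin 3) ∈ s)
      = {{0},{0,1},{0,2},{0,1,2}} := by decide
  have e1 : Finset.univ.filter (fun s : Finset (Fin 3) => (1:Fin 3) ∈ s)
      = {{1},{0,1},{1,2},{0,1,2}} := by decide
  have e2 : Finset.univ.filter (fun s : Finset (Fin 3) => (2:Fin 3) ∈ s)
      = {{2},{0,2},{1,2},{0,1,2}} := by decide
  have sum4 : ∀ (a b c d : Finset (Fin 3)) (f : Finset (Fin 3) → ℝ),
      a ∉ ({b,c,d} : Finset (Finset (Fin 3))) → b ∉ ({c,d} : Finset (Finset (Fin 3))) →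
      c ∉ ({d} : Finset (Finset (Fin 3))) →
      ∑ s ∈ ({a,b,c,d} : Finset (Finset (Fin 3))), f s = f a + f b + f c + f d := by
    intro a b c d f h1 h2 h3
    rw [Finset.sum_insert h1, Finset.sum_insert h2, Finset.sum_insert h3,
      Finset.sum_singleton]
    ring
  have F0 : bagFreq M (fun y => if y = 0 then (1:ℝ) else 0) 0 = 6/10 := by
    rw [key, e0, sum4 _ _ _ _ _ (by decide) (by decide) (by decide),
      v1, v3, v5, v7]; norm_num
  have F1 : bagFreq M (fun y => if y = 0 then (1:ℝ) else 0) 1 = 5/10 := by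
    rw [key, e1, sum4 _ _ _ _ _ (by decide) (by decide) (by decide),
      v4, v3, v6, v7]; norm_num
  have F2 : bagFreq M (fun y => if y = 0 then (1:ℝ) else 0) 2 = 4/10 := by
    rw [key, e2, sum4 _ _ _ _ _ (by decide) (by decide) (by decide),
      v2, v5, v6, v7]; norm_num
  have A0 : (∑ s ∈ Finset.univ.filter (fun s : Finset (Fin 3) => 0 ∈ s),
      M 0 s / (s.card : ℝ)) = 7/20 := by
    rw [e0, sum4 _ _ _ _ _ (by decide) (by decide) (by decide)]
    rw [v1, v3, v5, v7]
    norm_num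
  have A2 : (∑ s ∈ Finset.univ.filter (fun s : Finset (Fin 3) => 2 ∈ s),
      M 0 s / (s.card : ℝ)) = 8/20 := by
    rw [e2, sum4 _ _ _ _ _ (by decide) (by decide) (by decide)]
    rw [v2, v5, v6, v7]
    norm_num
  have hcase : ∀ y : Fin 3, y = 0 ∨ y = 1 ∨ y = 2 := by decide
  refine ⟨F0, F1, F2, ?_, ?_, A0, A2, ?_⟩
  · apply Set.eq_singleton_iff_unique_mem.mpr
    constructor
    · intro y'
      rcases hcase y' with h|h|h <;> subst h <;>
        [rw [F0]; rw [F1, F0]; rw [F2, F0]] <;> norm_num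
    · intro y hy
      rcases hcase y with h|h|h <;> subst h
      · rfl
      · have := hy 0; rw [F0, F1] at this; norm_num at this
      · have := hy 0; rw [F0, F2] at this; norm_num at this
  · apply Set.eq_singleton_iff_unique_mem.mpr
    constructor
    · intro y'
      rcases hcase y' with h|h|h <;> subst h <;>
        simp only [if_pos rfl, if_neg (show (1:Fin 3) ≠ 0 from by decide),
          if_neg (show (2:Fin 3) ≠ 0 from by decide)] <;> norm_num
    · intro y hy
      rcases hcase y with h|h|h <;> subst h
      · rfl
      · have := hy 0
        simp only [if_pos rfl, if_neg (show (1:Fin 3) ≠ 0 from by decide)] at this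
        norm_num at this
      · have := hy 0
        simp only [if_pos rfl, if_neg (show (2:Fin 3) ≠ 0 from by decide)] at this
        norm_num at this
  · intro h
    have := h 2 (by decide)
    rw [A0, A2] at this
    norm_num at this
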